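/- Let A be a generalized Cartan matrix of hyperbolic type of size n+1 with n ≥ 3. Then for all indices i ≠ j one has A i j * A j i ≤ 3. (This corresponds to the paper's remark in the proof of Lemma 2 that the value a₁₂ = −4, i.e., a product of off-diagonal entries equal to 4, occurs only when the fundamental simplices are triangles, i.e., only in size 3.) -/

import Mathlib

open Matrix

/-- A generalized Cartan matrix: `A i i = 2`, off-diagonal entries nonpositive,
and `A i j = 0 ↔ A j i = 0`. -/
def IsGCM {n : ℕ} (A : Matrix (Fin (n + 1)) (Fin (n + 1)) ℤ) : Prop :=
  (∀ i, A i i = 2) ∧ (∀ i j, i ≠ j → A i j ≤ 0) ∧ (∀ i j, A i j = 0 ↔ A j i = 0)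

/-- `A` is indecomposable: for every nonempty proper subset `S` of the index set,
there are `i ∈ S` and `j ∉ S` with `A i j ≠ 0`. -/
def IsIndecomposable {n : ℕ} (A : Matrix (Fin (n + 1)) (Fin (n + 1)) ℤ) : Prop :=
  ∀ S : Set (Fin (n + 1)), S.Nonempty → S ≠ Set.univ → ∃ i ∈ S, ∃ j, j ∉ S ∧ A i j ≠ 0

/-- `B` is a symmetrization of `A`: `B` is symmetric and `B i j = d i * A i j` for some
positive rationals `d i`. -/
def IsSymmetrization {n : ℕ} (A : Matrix (Fin (n + 1)) (Fin (n + 1)) ℤ)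
    (B : Matrix (Fin (n + 1)) (Fin (n + 1)) ℚ) : Prop :=
  B.IsSymm ∧ ∃ d : Fin (n + 1) → ℚ, (∀ i, 0 < d i) ∧ ∀ i j, B i j = d i * (A i j : ℚ)

/-- The principal submatrix of `B` on the index subset `S` is positive semidefinite:
the associated quadratic form is nonnegative on all vectors supported on `S`. -/
def PosSemidefOn {n : ℕ} (B : Matrix (Fin (n + 1)) (Fin (n + 1)) ℚ)
    (S : Set (Fin (n + 1))) : Prop :=
  ∀ x : Fin (n + 1) → ℚ, (∀ i, i ∉ S → x i = 0) → 0 ≤ ∑ i, ∑ j, x i * B i j * x j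

/-- `A` is of hyperbolic type with symmetrization `B`: `A` is an indecomposable generalized
Cartan matrix, `B` is a symmetrization of `A`, `B` is not positive semidefinite, and every
proper principal submatrix of `B` is positive semidefinite. -/
def IsHyperbolicWith {n : ℕ} (A : Matrix (Fin (n + 1)) (Fin (n + 1)) ℤ)
    (B : Matrix (Fin (n + 1)) (Fin (n + 1)) ℚ) : Prop :=
  IsGCM A ∧ IsIndecomposable A ∧ IsSymmetrization A B ∧
    ¬ PosSemidefOn B Set.univ ∧
    ∀ S : Set (Fin (n + 1)), S ≠ Set.univ → PosSemidefOn B S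

/-- `A` is a generalized Cartan matrix of hyperbolic type. -/
def IsHyperbolicType {n : ℕ} (A : Matrix (Fin (n + 1)) (Fin (n + 1)) ℤ) : Prop :=
  ∃ B, IsHyperbolicWith A B


private lemma sum_supp3 {N : ℕ} (g : Fin N → ℚ) (i j k : Fin N)
    (hij : i ≠ j) (hik : i ≠ k) (hjk : j ≠ k)
    (h : ∀ m, m ≠ i → m ≠ j → m ≠ k → g m = 0) :
    ∑ m, g m = g i + g j + g k := by
  rw [← Finset.sum_subset (Finset.subset_univ ({i, j, k} : Finset (Fin N)))
    (by
      intro m _ hm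
      simp only [Finset.mem_insert, Finset.mem_singleton, not_or] at hm
      exact h m hm.1 hm.2.1 hm.2.2)]
  rw [Finset.sum_insert (by simp [hij, hik]), Finset.sum_insert (by simp [hjk]),
    Finset.sum_singleton, add_assoc]

private lemma quad_expand {N : ℕ} (B : Matrix (Fin N) (Fin N) ℚ) (i j k : Fin N)
    (hij : i ≠ j) (hik : i ≠ k) (hjk : j ≠ k) (p q r : ℚ) :
    (∑ a, ∑ b, (fun m => if m = i then p else if m = j then q else if m = k then r else 0) a
        * B a b *
        (fun m => if m = i then p else if m = j then q else if m = k then r else 0) b) =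
      p * B i i * p + p * B i j * q + p * B i k * r
      + q * B j i * p + q * B j j * q + q * B j k * r
      + r * B k i * p + r * B k j * q + r * B k k * r := by
  set x : Fin N → ℚ := fun m => if m = i then p else if m = j then q else if m = k then r else 0
    with hx
  have hx0 : ∀ m, m ≠ i → m ≠ j → m ≠ k → x m = 0 := by
    intro m h1 h2 h3; simp [hx, h1, h2, h3]
  have inner : ∀ a : Fin N, (∑ b, x a * B a b * x b)
      = x a * B a i * x i + x a * B a j * x j + x a * B a k * x k := by
    intro a
    exact sum_supp3 (fun b => x a * B a b * x b) i j k hij hik hjk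
      (fun m h1 h2 h3 => by show x a * B a m * x m = 0; rw [hx0 m h1 h2 h3, mul_zero])
  rw [sum_supp3 (fun a => ∑ b, x a * B a b * x b) i j k hij hik hjk
    (fun m h1 h2 h3 => by simp [hx0 m h1 h2 h3]), inner, inner, inner]
  simp only [hx]
  simp [hij, hik, hjk, Ne.symm hij, Ne.symm hik, Ne.symm hjk]
  ring

private lemma exists_ne3 {n : ℕ} (hn : 3 ≤ n) (i j k : Fin (n + 1)) :
    ∃ m : Fin (n + 1), m ≠ i ∧ m ≠ j ∧ m ≠ k := by
  have hcard : ({i, j, k} : Finset (Fin (n + 1))).card ≤ 3 := by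
    calc ({i, j, k} : Finset (Fin (n + 1))).card ≤ ({j, k} : Finset (Fin (n + 1))).card + 1 :=
          Finset.card_insert_le _ _
      _ ≤ (({k} : Finset (Fin (n + 1))).card + 1) + 1 := by
          exact Nat.add_le_add_right (Finset.card_insert_le _ _) 1
      _ = 3 := by simp
  have : (({i, j, k} : Finset (Fin (n + 1)))ᶜ).Nonempty := by
    rw [← Finset.card_pos, Finset.card_compl, Fintype.card_fin]
    omega
  obtain ⟨m, hm⟩ := this
  simp only [Finset.mem_compl, Finset.mem_insert, Finset.mem_singleton, not_or] at hm
  exact ⟨m, hm.1, hm.2.1, hm.2.2⟩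

set_option maxHeartbeats 1000000 in
/-- For a generalized Cartan matrix of hyperbolic type of size `n+1` with `n ≥ 3`,
one has `A i j * A j i ≤ 3` for all `i ≠ j`. -/
theorem gcm_hyperbolic_offdiag_prod_le_three {n : ℕ} (hn : 3 ≤ n)
    (A : Matrix (Fin (n + 1)) (Fin (n + 1)) ℤ) (hA : IsHyperbolicType A) :
    ∀ i j, i ≠ j → A i j * A j i ≤ 3 := by
  obtain ⟨B, hGCM, hInd, hSym, _, hPSD⟩ := hA
  obtain ⟨hdiag, hoff, hzero⟩ := hGCM
  obtain ⟨hBsymm, d, hdpos, hBd⟩ := hSym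
  have hBsym : ∀ p q, B q p = B p q := fun p q => hBsymm.apply p q
  have hBdiag : ∀ p, B p p = 2 * d p := by
    intro p; rw [hBd, hdiag]; push_cast; ring
  intro i j hij
  by_contra hlt
  push_neg at hlt
  have h4 : 4 ≤ A i j * A j i := hlt
  have hij0 : A i j < 0 := by
    rcases lt_or_eq_of_le (hoff i j hij) with h | h
    · exact h
    · exfalso; rw [h, zero_mul] at h4; omega
  have hji0 : A j i < 0 := by
    rcases lt_or_eq_of_le (hoff j i hij.symm) with h | h
    · exact h
    · exfalso; rw [h, mul_zero] at h4; omega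
  set a := d i with ha
  set b := d j with hb
  set c := B i j with hc
  have hapos : 0 < a := hdpos i
  have hbpos : 0 < b := hdpos j
  have hcval : c = a * (A i j : ℚ) := hBd i j
  have hcval' : c = b * (A j i : ℚ) := by rw [hc, ← hBsym, hBd]
  have hcneg : c < 0 := by
    rw [hcval]
    exact mul_neg_of_pos_of_neg hapos (by exact_mod_cast hij0)
  have hcsq : c * c = a * b * ((A i j * A j i : ℤ) : ℚ) := by
    nth_rewrite 1 [hcval]
    nth_rewrite 1 [hcval']
    push_cast; ring
  -- Step 1: PSD on {i,j} gives A i j * A j i ≤ 4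
  obtain ⟨k, hki, hkj, -⟩ := exists_ne3 hn i j j
  have hSne : ({i, j} : Set (Fin (n + 1))) ≠ Set.univ := by
    intro h
    have : k ∈ ({i, j} : Set (Fin (n + 1))) := h ▸ Set.mem_univ k
    simp [hki, hkj] at this
  have hQ1 := hPSD _ hSne
    (fun m => if m = i then 2 * b else if m = j then -c else if m = k then 0 else 0)
    (by
      intro m hm
      simp only [Set.mem_insert_iff, Set.mem_singleton_iff, not_or] at hm
      simp [hm.1, hm.2])
  rw [quad_expand B i j k hij (Ne.symm hki) (Ne.symm hkj)] at hQ1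
  have hQ1' : 0 ≤ 2 * b * (4 * (a * b) - c * c) := by
    rw [hBdiag, hBdiag, hBsym i j, ← hc] at hQ1
    nlinarith [hQ1]
  have hle4 : ((A i j * A j i : ℤ) : ℚ) ≤ 4 := by
    have h1 : c * c ≤ 4 * (a * b) := by nlinarith [hQ1', hbpos]
    nlinarith [h1, hcsq, mul_pos hapos hbpos]
  have heq4 : A i j * A j i = 4 := le_antisymm (by exact_mod_cast hle4) h4
  have hcsq4 : c * c = 4 * (a * b) := by
    rw [hcsq, heq4]; push_cast; ring
  -- Step 2: for every k ∉ {i,j}, A i k = 0 and A j k = 0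
  have key : ∀ k : Fin (n + 1), k ≠ i → k ≠ j → A i k = 0 ∧ A j k = 0 := by
    intro k hki hkj
    obtain ⟨m, hmi, hmj, hmk⟩ := exists_ne3 hn i j k
    have hSne : ({i, j, k} : Set (Fin (n + 1))) ≠ Set.univ := by
      intro h
      have : m ∈ ({i, j, k} : Set (Fin (n + 1))) := h ▸ Set.mem_univ m
      simp [hmi, hmj, hmk] at this
    have hBik : B i k ≤ 0 := by
      rw [hBd]
      exact mul_nonpos_of_nonneg_of_nonpos (le_of_lt hapos)
        (by exact_mod_cast hoff i k (Ne.symm hki))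
    have hBjk : B j k ≤ 0 := by
      rw [hBd]
      exact mul_nonpos_of_nonneg_of_nonpos (le_of_lt hbpos)
        (by exact_mod_cast hoff j k (Ne.symm hkj))
    obtain ⟨L, hL⟩ : ∃ L : ℚ, L = c * B i k - 2 * a * B j k := ⟨_, rfl⟩
    have hL1 : 0 ≤ c * B i k := by nlinarith [hcneg, hBik]
    have hL2 : 0 ≤ -(2 * a * B j k) := by nlinarith
    have hLnn : 0 ≤ L := by rw [hL]; linarith
    have hdk : 0 < d k := hdpos k
    obtain ⟨t, ht⟩ : ∃ t : ℚ, t = -L / (2 * d k) := ⟨_, rfl⟩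
    have hQ2 := hPSD _ hSne
      (fun x => if x = i then c else if x = j then -(2 * a) else if x = k then t else 0)
      (by
        intro x hx
        simp only [Set.mem_insert_iff, Set.mem_singleton_iff, not_or] at hx
        simp [hx.1, hx.2.1, hx.2.2])
    rw [quad_expand B i j k hij (Ne.symm hki) (Ne.symm hkj)] at hQ2
    rw [hBdiag, hBdiag, hBdiag, hBsym i j, hBsym i k, hBsym j k, ← hc] at hQ2
    -- hQ2 : 0 ≤ ... = 2tL + 2 d k t² (using c² = 4ab)
    have hcsq4a : a * (c * c) = a * (4 * (a * b)) := by rw [hcsq4]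
    have hQ2' : 0 ≤ 2 * t * L + 2 * d k * (t * t) := by
      rw [hL]
      nlinarith [hQ2, hcsq4a]
    have htval : 2 * d k * t = -L := by
      rw [ht]; field_simp [ne_of_gt hdk]
    have h1 : (2 * d k * t) * t = (-L) * t := by rw [htval]
    have h2 : (2 * d k * t) * L = (-L) * L := by rw [htval]
    have h3 : 0 ≤ t * L := by nlinarith [hQ2', h1]
    have hLsq : L * L ≤ 0 := by nlinarith [h2, h3, hdk]
    have hL0 : L = 0 := mul_self_eq_zero.mp (le_antisymm hLsq (mul_self_nonneg L))
    have hc1 : c * B i k = 0 := le_antisymm (by rw [hL] at hL0; linarith) hL1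
    have hc2 : 2 * a * B j k = 0 := by rw [hL] at hL0; linarith
    have hBik0 : B i k = 0 := by
      rcases mul_eq_zero.1 hc1 with h | h
      · exact absurd h (ne_of_lt hcneg)
      · exact h
    have hBjk0 : B j k = 0 := by
      rcases mul_eq_zero.1 hc2 with h | h
      · exfalso; nlinarith
      · exact h
    constructor
    · have := hBd i k; rw [hBik0] at this
      have : (A i k : ℚ) = 0 := by
        rcases mul_eq_zero.1 this.symm with h | h
        · exact absurd h (ne_of_gt hapos)
        · exact h
      exact_mod_cast this
    · have := hBd j k; rw [hBjk0] at this
      have : (A j k : ℚ) = 0 := by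
        rcases mul_eq_zero.1 this.symm with h | h
        · exact absurd h (ne_of_gt hbpos)
        · exact h
      exact_mod_cast this
  -- indecomposability contradiction on S = {i, j}
  have hSne2 : ({i, j} : Set (Fin (n + 1))) ≠ Set.univ := by
    intro h
    have : k ∈ ({i, j} : Set (Fin (n + 1))) := h ▸ Set.mem_univ k
    simp [hki, hkj] at this
  obtain ⟨p, hp, q, hq, hpq⟩ := hInd {i, j} ⟨i, Set.mem_insert i _⟩ hSne2
  simp only [Set.mem_insert_iff, Set.mem_singleton_iff, not_or] at hp hq
  rcases hp with rfl | rfl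
  · exact hpq (key q hq.1 hq.2).1
  · exact hpq (key q hq.1 hq.2).2
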